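/- Let g be a standard Gaussian random vector in ℝ^m (m ≥ 1) and let x > 0. Then the probability that ‖g‖⁻¹ ≥ x (equivalently that ‖g‖ ≤ 1/x) is at most (m/2)^{(m−2)/2} / (Γ(m/2) · x^m), where ‖·‖ is the Euclidean norm and Γ is the Gamma function. -/

import Mathlib

open Matrix MeasureTheory ProbabilityTheory

/-- The `j`-th largest singular value (1-indexed; `0` for `j` out of range). -/
noncomputable def sval {m n : ℕ} (A : Matrix (Fin m) (Fin n) ℝ) (j : ℕ) : ℝ :=
  if h : 1 ≤ j ∧ j ≤ n then
    Real.sqrt ((by have h := Matrix.isHermitian_conjTranspose_mul_self A; rwa [Matrix.conjTranspose_eq_transpose_of_trivial] at h : (Aᵀ * A).IsHermitian).eigenvalues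
      (Tuple.sort (by have h := Matrix.isHermitian_conjTranspose_mul_self A; rwa [Matrix.conjTranspose_eq_transpose_of_trivial] at h : (Aᵀ * A).IsHermitian).eigenvalues ⟨n - j, by omega⟩))
  else 0

/-- The spectral norm of a real matrix. -/
noncomputable def spec {m n : ℕ} (A : Matrix (Fin m) (Fin n) ℝ) : ℝ :=
  ‖LinearMap.toContinuousLinearMap (Matrix.toEuclideanLin A)‖

open Classical in
/-- The Moore–Penrose pseudo-inverse. -/
noncomputable def pinv {m n : ℕ} (M : Matrix (Fin m) (Fin n) ℝ) : Matrix (Fin n) (Fin m) ℝ :=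
  if h : ∃ X : Matrix (Fin n) (Fin m) ℝ,
      M * X * M = M ∧ X * M * X = X ∧ (M * X)ᵀ = M * X ∧ (X * M)ᵀ = X * M
  then h.choose else 0

/-- Leading (northwestern) `k × l` submatrix. -/
def lead {m n : ℕ} (A : Matrix (Fin m) (Fin n) ℝ) (k l : ℕ) (hk : k ≤ m) (hl : l ≤ n) :
    Matrix (Fin k) (Fin l) ℝ :=
  A.submatrix (Fin.castLE hk) (Fin.castLE hl)

/-- Schur complement of the leading `h × h` block in `A`. -/
noncomputable def schur {n : ℕ} (A : Matrix (Fin n) (Fin n) ℝ) (h : ℕ) (hh : h ≤ n) :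
    Matrix (Fin (n - h)) (Fin (n - h)) ℝ :=
  A.submatrix (fun i => (⟨h + i.1, by have := i.isLt; omega⟩ : Fin n))
      (fun j => (⟨h + j.1, by have := j.isLt; omega⟩ : Fin n))
    - A.submatrix (fun i => (⟨h + i.1, by have := i.isLt; omega⟩ : Fin n)) (Fin.castLE hh)
      * (A.submatrix (Fin.castLE hh) (Fin.castLE hh))⁻¹
      * A.submatrix (Fin.castLE hh) (fun j => (⟨h + j.1, by have := j.isLt; omega⟩ : Fin n))

/-- The distribution of a standard Gaussian random `m × n` matrix (as entrywise functions). -/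
noncomputable def stdGaussianM (m n : ℕ) : Measure (Fin m → Fin n → ℝ) :=
  Measure.pi fun _ => Measure.pi fun _ => gaussianReal 0 1

/-- The `m × n` "diagonal" matrix of singular values of `A` in nonincreasing order. -/
noncomputable def svdSigma {m n : ℕ} (A : Matrix (Fin m) (Fin n) ℝ) : Matrix (Fin m) (Fin n) ℝ :=
  Matrix.of fun i j => if (i : ℕ) = (j : ℕ) then sval A ((i : ℕ) + 1) else 0
private lemma gamma_key : ∀ m : ℕ, 1 ≤ m →
    Real.Gamma ((m : ℝ) / 2) ≤
      ((m : ℝ) / 2) ^ (((m : ℝ) - 2) / 2) * (Real.pi / 2) ^ ((m : ℝ) / 2) := by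
  intro m
  induction m using Nat.strong_induction_on with
  | _ m ih =>
    intro hm
    have hπ : (1:ℝ) ≤ Real.pi / 2 := by nlinarith [Real.pi_gt_three]
    match m, hm, ih with
    | 1, _, _ =>
      have h1 : ((1:ℕ):ℝ) = 1 := by norm_num
      rw [h1]
      have e1 : ((1:ℝ)/2) ^ (((1:ℝ) - 2)/2) = (2:ℝ) ^ ((1:ℝ)/2) := by
        rw [show ((1:ℝ) - 2)/2 = -(1/2) by norm_num, Real.rpow_neg (by norm_num),
          ← Real.inv_rpow (by norm_num)]
        norm_num
      rw [e1, ← Real.mul_rpow (by norm_num) (by positivity),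
        show (2:ℝ) * (Real.pi/2) = Real.pi by ring,
        ← Real.sqrt_eq_rpow, Real.Gamma_one_half_eq]
    | 2, _, _ =>
      have h2 : ((2:ℕ):ℝ) = 2 := by norm_num
      rw [h2, show (2:ℝ)/2 = 1 by norm_num, show ((2:ℝ)-2)/2 = (0:ℝ) by norm_num,
        Real.rpow_zero, Real.Gamma_one, Real.rpow_one, one_mul]
      exact hπ
    | (k+3), _, ih =>
      set K : ℝ := ((k:ℝ) + 1) with hK
      have hK0 : (0:ℝ) < K := by positivity
      have hcast : (((k+3:ℕ)):ℝ) = K + 2 := by push_cast; ring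
      have prev := ih (k+1) (by omega) (by omega)
      have hprevcast : (((k+1:ℕ)):ℝ) = K := by push_cast; ring
      rw [hprevcast] at prev
      rw [hcast]
      have hΓ : Real.Gamma ((K + 2)/2) = (K/2) * Real.Gamma (K/2) := by
        rw [show (K + 2)/2 = K/2 + 1 by ring, Real.Gamma_add_one (by positivity)]
      rw [hΓ]
      have step1 : (K/2) * Real.Gamma (K/2) ≤
          (K/2) * ((K/2) ^ ((K - 2)/2) * (Real.pi/2) ^ (K/2)) := by
        have := mul_le_mul_of_nonneg_left prev (le_of_lt (by positivity : (0:ℝ) < K/2))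
        linarith
      have step2 : (K/2) * ((K/2) ^ ((K - 2)/2) * (Real.pi/2) ^ (K/2)) =
          (K/2) ^ (K/2) * (Real.pi/2) ^ (K/2) := by
        rw [← mul_assoc, ← Real.rpow_one_add' (by positivity)
          (by rw [show (1:ℝ) + (K-2)/2 = K/2 by ring]; positivity),
          show (1:ℝ) + (K-2)/2 = K/2 by ring]
      have step3 : (K/2) ^ (K/2) * (Real.pi/2) ^ (K/2) ≤
          ((K+2)/2) ^ ((K + 2 - 2)/2) * (Real.pi/2) ^ ((K+2)/2) := by
        have h1 : (K/2) ^ (K/2) ≤ ((K+2)/2) ^ ((K+2-2)/2) := by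
          rw [show (K+2-2)/2 = K/2 by ring]
          exact Real.rpow_le_rpow (by positivity) (by linarith) (by positivity)
        have h2 : (Real.pi/2) ^ (K/2) ≤ (Real.pi/2) ^ ((K+2)/2) := by
          apply Real.rpow_le_rpow_of_exponent_le hπ
          linarith
        exact mul_le_mul h1 h2 (by positivity) (by positivity)
      linarith

/-- Tail bound for the reciprocal of the norm of a standard Gaussian vector:
`P(‖g‖ ≤ 1/x) ≤ (m/2)^{(m-2)/2} / (Γ(m/2)·x^m)`. -/
theorem gaussian_vector_small_norm_bound (m : ℕ) (hm : 1 ≤ m) (x : ℝ) (hx : 0 < x) :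
    (Measure.pi fun _ : Fin m => gaussianReal 0 1)
        {g : Fin m → ℝ | Real.sqrt (∑ i, g i ^ 2) ≤ 1 / x} ≤
      ENNReal.ofReal
        (((m : ℝ) / 2) ^ (((m : ℝ) - 2) / 2) / (Real.Gamma ((m : ℝ) / 2) * x ^ m)) := by
  have hπ : (0:ℝ) < Real.pi := Real.pi_pos
  set r : ℝ := 1 / x with hrdef
  have hr0 : 0 < r := by positivity
  set c : ℝ := (Real.sqrt (2 * Real.pi))⁻¹ * (2 * r) with hc
  have hc0 : 0 ≤ c := by positivity
  have hm0 : (0:ℝ) < (m:ℝ) := by exact_mod_cast hm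
  have hΓ : 0 < Real.Gamma ((m:ℝ)/2) := Real.Gamma_pos_of_pos (by positivity)
  -- subset of the box
  have hsub : {g : Fin m → ℝ | Real.sqrt (∑ i, g i ^ 2) ≤ 1 / x} ⊆
      Set.pi Set.univ (fun _ : Fin m => Metric.closedBall (0:ℝ) r) := by
    intro g hg
    rw [Set.mem_univ_pi]
    intro i
    simp only [Metric.mem_closedBall, Real.dist_eq, sub_zero]
    have h1 : g i ^ 2 ≤ ∑ j, g j ^ 2 :=
      Finset.single_le_sum (fun j _ => sq_nonneg (g j)) (Finset.mem_univ i)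
    rw [← Real.sqrt_sq_eq_abs]
    exact le_trans (Real.sqrt_le_sqrt h1) hg
  -- one dimensional bound
  have h1d : gaussianReal 0 1 (Metric.closedBall (0:ℝ) r) ≤ ENNReal.ofReal c := by
    rw [gaussianReal_apply 0 one_ne_zero]
    calc ∫⁻ y in Metric.closedBall (0:ℝ) r, gaussianPDF 0 1 y
        ≤ ∫⁻ _ in Metric.closedBall (0:ℝ) r,
            ENNReal.ofReal ((Real.sqrt (2 * Real.pi))⁻¹) := by
          apply lintegral_mono
          intro y
          apply ENNReal.ofReal_le_ofReal
          unfold gaussianPDFReal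
          simp only [NNReal.coe_one, mul_one, sub_zero]
          calc (Real.sqrt (2 * Real.pi))⁻¹ * Real.exp (-y ^ 2 / 2)
              ≤ (Real.sqrt (2 * Real.pi))⁻¹ * 1 := by
                gcongr
                exact Real.exp_le_one_iff.2 (by nlinarith [sq_nonneg y])
            _ = (Real.sqrt (2 * Real.pi))⁻¹ := mul_one _
      _ = ENNReal.ofReal ((Real.sqrt (2 * Real.pi))⁻¹)
            * volume (Metric.closedBall (0:ℝ) r) := setLIntegral_const _ _
      _ = ENNReal.ofReal c := by
          rw [Real.volume_closedBall, ← ENNReal.ofReal_mul (by positivity)]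
  -- real-number inequality
  have hceq : c = Real.sqrt (2 / Real.pi) * r := by
    have hs2 : Real.sqrt 2 * Real.sqrt 2 = 2 := Real.mul_self_sqrt (by norm_num)
    have hsd : Real.sqrt (2 / Real.pi) = Real.sqrt 2 / Real.sqrt Real.pi :=
      Real.sqrt_div (by norm_num) _
    have hsm : Real.sqrt (2 * Real.pi) = Real.sqrt 2 * Real.sqrt Real.pi :=
      Real.sqrt_mul (by norm_num) _
    have hπs : 0 < Real.sqrt Real.pi := Real.sqrt_pos.2 hπ
    rw [hc, hsd, hsm]
    field_simp
    linear_combination (-1 : ℝ) * hs2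
  have hpow : c ^ m = (2 / Real.pi) ^ ((m:ℝ)/2) * r ^ m := by
    rw [hceq, mul_pow]
    congr 1
    rw [Real.sqrt_eq_rpow, ← Real.rpow_natCast ((2 / Real.pi) ^ ((1:ℝ)/2)) m,
      ← Real.rpow_mul (by positivity)]
    congr 1
    ring
  have hmul1 : (2 / Real.pi : ℝ) ^ ((m:ℝ)/2) * (Real.pi / 2) ^ ((m:ℝ)/2) = 1 := by
    rw [← Real.mul_rpow (by positivity) (by positivity),
      show (2 / Real.pi) * (Real.pi / 2) = 1 by field_simp, Real.one_rpow]
  have key2 : (2 / Real.pi : ℝ) ^ ((m:ℝ)/2) * Real.Gamma ((m:ℝ)/2) ≤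
      ((m:ℝ)/2) ^ (((m:ℝ) - 2)/2) := by
    have h := gamma_key m hm
    calc (2 / Real.pi : ℝ) ^ ((m:ℝ)/2) * Real.Gamma ((m:ℝ)/2)
        ≤ (2 / Real.pi : ℝ) ^ ((m:ℝ)/2) *
            (((m:ℝ)/2) ^ (((m:ℝ) - 2)/2) * (Real.pi/2) ^ ((m:ℝ)/2)) := by
          gcongr
      _ = ((m:ℝ)/2) ^ (((m:ℝ) - 2)/2) *
            ((2 / Real.pi : ℝ) ^ ((m:ℝ)/2) * (Real.pi/2) ^ ((m:ℝ)/2)) := by ring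
      _ = ((m:ℝ)/2) ^ (((m:ℝ) - 2)/2) := by rw [hmul1, mul_one]
  have keyreal : c ^ m ≤
      ((m:ℝ)/2) ^ (((m:ℝ) - 2)/2) / (Real.Gamma ((m:ℝ)/2) * x ^ m) := by
    rw [hpow, le_div_iff₀ (by positivity)]
    have hrx : r ^ m * x ^ m = 1 := by
      rw [← mul_pow, hrdef]
      field_simp
      exact one_pow m
    calc (2 / Real.pi : ℝ) ^ ((m:ℝ)/2) * r ^ m * (Real.Gamma ((m:ℝ)/2) * x ^ m)
        = ((2 / Real.pi : ℝ) ^ ((m:ℝ)/2) * Real.Gamma ((m:ℝ)/2)) * (r ^ m * x ^ m) := by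
          ring
      _ = (2 / Real.pi : ℝ) ^ ((m:ℝ)/2) * Real.Gamma ((m:ℝ)/2) := by rw [hrx, mul_one]
      _ ≤ ((m:ℝ)/2) ^ (((m:ℝ) - 2)/2) := key2
  -- combine
  calc (Measure.pi fun _ : Fin m => gaussianReal 0 1)
        {g : Fin m → ℝ | Real.sqrt (∑ i, g i ^ 2) ≤ 1 / x}
      ≤ (Measure.pi fun _ : Fin m => gaussianReal 0 1)
          (Set.pi Set.univ (fun _ : Fin m => Metric.closedBall (0:ℝ) r)) :=
        measure_mono hsub
    _ = ∏ _i : Fin m, gaussianReal 0 1 (Metric.closedBall (0:ℝ) r) := Measure.pi_pi _ _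
    _ = gaussianReal 0 1 (Metric.closedBall (0:ℝ) r) ^ m := by
        rw [Finset.prod_const, Finset.card_univ, Fintype.card_fin]
    _ ≤ ENNReal.ofReal c ^ m := pow_le_pow_left₀ zero_le h1d m
    _ = ENNReal.ofReal (c ^ m) := (ENNReal.ofReal_pow hc0 m).symm
    _ ≤ _ := ENNReal.ofReal_le_ofReal keyreal
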